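/- For the augmentation ideal J of ℤ[t₁^{±1},…,t_n^{±1}], the quotient J^i/J^{i+1} is a free abelian group with basis the classes of the monomials (t_{ℓ₁}-1)⋯(t_{ℓ_i}-1) with 1 ≤ ℓ₁ ≤ ⋯ ≤ ℓ_i ≤ n. -/

import Mathlib

/-- The Laurent polynomial ring `ℤ[t₁^{±1},…,t_n^{±1}]`, realized as the group ring
`ℤ[ℤⁿ]`. -/
abbrev LaurentMv (n : ℕ) : Type := AddMonoidAlgebra ℤ (Fin n →₀ ℤ)

/-- The variable `t_i` in `ℤ[t₁^{±1},…,t_n^{±1}]`. -/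
noncomputable def tvar {n : ℕ} (i : Fin n) : LaurentMv n :=
  AddMonoidAlgebra.single (Finsupp.single i 1) 1

/-- The augmentation map `ℤ[t₁^{±1},…,t_n^{±1}] → ℤ`, `t_i ↦ 1`. -/
noncomputable def aug (n : ℕ) : LaurentMv n →+* ℤ :=
  AddMonoidAlgebra.liftNCRingHom (RingHom.id ℤ) 1 (fun _ _ => Commute.one_right _)

/-- The augmentation ideal `J = ker(aug)` of `ℤ[t₁^{±1},…,t_n^{±1}]`. -/
noncomputable def augIdeal (n : ℕ) : Ideal (LaurentMv n) := RingHom.ker (aug n)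

lemma tvar_sub_one_mem {n : ℕ} (i : Fin n) : tvar i - 1 ∈ augIdeal n := by
  have h1 : aug n (tvar i) = 1 := by
    simp [aug, tvar, AddMonoidAlgebra.liftNCRingHom, AddMonoidAlgebra.liftNC_single]
  simp [augIdeal, RingHom.mem_ker, map_sub, h1]

lemma prod_mem_pow {R : Type} [CommRing R] (J : Ideal R) :
    ∀ (i : ℕ) (f : Fin i → R), (∀ j, f j ∈ J) → ∏ j, f j ∈ J ^ i
  | 0, f, _ => by simp
  | (i + 1), f, hf => by
      rw [Fin.prod_univ_succ, pow_succ']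
      exact Ideal.mul_mem_mul (hf 0) (prod_mem_pow J i _ (fun j => hf _))


noncomputable abbrev genSet (n : ℕ) : Set (LaurentMv n) := Set.range fun j => tvar j - 1

lemma aug_single {n : ℕ} (d : Fin n →₀ ℤ) (c : ℤ) :
    aug n (AddMonoidAlgebra.single d c) = c := by
  simp [aug, AddMonoidAlgebra.liftNCRingHom, AddMonoidAlgebra.liftNC_single]

lemma single_mul_sub {n : ℕ} (d e : Fin n →₀ ℤ)
    (hd : (AddMonoidAlgebra.single d 1 : LaurentMv n) - 1 ∈ Ideal.span (genSet n))
    (he : (AddMonoidAlgebra.single e 1 : LaurentMv n) - 1 ∈ Ideal.span (genSet n)) :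
    (AddMonoidAlgebra.single (d + e) 1 : LaurentMv n) - 1 ∈ Ideal.span (genSet n) := by
  have key : (AddMonoidAlgebra.single (d + e) 1 : LaurentMv n) - 1 =
      AddMonoidAlgebra.single d 1 * ((AddMonoidAlgebra.single e 1 : LaurentMv n) - 1)
        + ((AddMonoidAlgebra.single d 1 : LaurentMv n) - 1) := by
    rw [mul_sub, AddMonoidAlgebra.single_mul_single]
    ring_nf
  rw [key]
  exact Ideal.add_mem _ (Ideal.mul_mem_left _ _ he) hd

lemma single_single_mem {n : ℕ} (j : Fin n) (k : ℤ) :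
    (AddMonoidAlgebra.single (Finsupp.single j k) 1 : LaurentMv n) - 1 ∈
      Ideal.span (genSet n) := by
  have hzero : (AddMonoidAlgebra.single (0 : Fin n →₀ ℤ) 1 : LaurentMv n) - 1 ∈
      Ideal.span (genSet n) := by
    rw [show (AddMonoidAlgebra.single (0 : Fin n →₀ ℤ) 1 : LaurentMv n) = 1 from rfl]
    simp
  have hone : (AddMonoidAlgebra.single (Finsupp.single j 1) 1 : LaurentMv n) - 1 ∈
      Ideal.span (genSet n) :=
    Ideal.subset_span ⟨j, rfl⟩
  have hneg : (AddMonoidAlgebra.single (Finsupp.single j (-1)) 1 : LaurentMv n) - 1 ∈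
      Ideal.span (genSet n) := by
    have hmul : (AddMonoidAlgebra.single (Finsupp.single j (-1)) 1 : LaurentMv n) *
        (tvar j - 1) =
        1 - AddMonoidAlgebra.single (Finsupp.single j (-1)) 1 := by
      rw [mul_sub, mul_one, tvar, AddMonoidAlgebra.single_mul_single]
      norm_num
      exact AddMonoidAlgebra.one_def.symm
    have := Ideal.mul_mem_left _ (AddMonoidAlgebra.single (Finsupp.single j (-1)) 1) hone
    rw [show (AddMonoidAlgebra.single (Finsupp.single j 1) 1 : LaurentMv n) = tvar j from rfl,
      hmul] at this
    simpa using Submodule.neg_mem _ this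
  induction k using Int.induction_on with
  | zero => simpa using hzero
  | succ k ih =>
    rw [show ((k : ℤ) + 1) = (k : ℤ) + 1 from rfl, Finsupp.single_add]
    exact single_mul_sub _ _ ih hone
  | pred k ih =>
    rw [show (-(k : ℤ) - 1) = -(k : ℤ) + (-1) from by ring, Finsupp.single_add]
    exact single_mul_sub _ _ ih hneg

lemma single_sub_one_mem {n : ℕ} (d : Fin n →₀ ℤ) :
    (AddMonoidAlgebra.single d 1 : LaurentMv n) - 1 ∈ Ideal.span (genSet n) := by
  induction d using Finsupp.induction with
  | zero =>
    rw [show (AddMonoidAlgebra.single (0 : Fin n →₀ ℤ) 1 : LaurentMv n) = 1 from rfl]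
    simp
  | single_add a b f _ _ ih => exact single_mul_sub _ _ (single_single_mem a b) ih

lemma augIdeal_eq_span (n : ℕ) : augIdeal n = Ideal.span (genSet n) := by
  apply le_antisymm
  · intro p hp
    have hp0 : aug n p = 0 := hp
    have hrepr : p = ∑ d ∈ p.coeff.support, (p.coeff d) • ((AddMonoidAlgebra.single d 1 : LaurentMv n) - 1) := by
      have h1 : ∑ d ∈ p.coeff.support, (p.coeff d) • ((AddMonoidAlgebra.single d 1 : LaurentMv n) - 1)
          = ∑ d ∈ p.coeff.support, (AddMonoidAlgebra.single d (p.coeff d) : LaurentMv n)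
            - (∑ d ∈ p.coeff.support, p.coeff d) • (1 : LaurentMv n) := by
        rw [Finset.sum_smul, ← Finset.sum_sub_distrib]
        congr 1
        ext d
        rw [smul_sub]
        congr 1
        rw [AddMonoidAlgebra.smul_single', mul_one]
      have h2 : ∑ d ∈ p.coeff.support, (AddMonoidAlgebra.single d (p.coeff d) : LaurentMv n) = p :=
        AddMonoidAlgebra.sum_coeff_single p
      have h3 : ∑ d ∈ p.coeff.support, p.coeff d = 0 := by
        calc ∑ d ∈ p.coeff.support, p.coeff d = ∑ d ∈ p.coeff.support, aug n (AddMonoidAlgebra.single d (p.coeff d)) := by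
              simp [aug_single]
        _ = aug n p := by rw [← map_sum, h2]
        _ = 0 := hp0
      rw [h1, h2, h3, zero_smul, sub_zero]
    rw [hrepr]
    exact Submodule.sum_mem _ fun d _ => Submodule.smul_of_tower_mem _ _ (single_sub_one_mem d)
  · rw [Ideal.span_le]
    rintro _ ⟨j, rfl⟩
    exact tvar_sub_one_mem j

open MvPolynomial

variable {n : ℕ}

lemma Finsupp.degree_add' {σ : Type*} (a b : σ →₀ ℕ) :
    (a + b).degree = a.degree + b.degree := by
  rw [show (Finsupp.degree : (σ →₀ ℕ) → ℕ) = ⇑(Finsupp.weight 1) from by rw [Finsupp.degree_eq_weight_one]; rfl,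
    map_add]

noncomputable abbrev mIdeal (n : ℕ) : Ideal (MvPolynomial (Fin n) ℤ) :=
  Ideal.span (Set.range (X : Fin n → MvPolynomial (Fin n) ℤ))

/-- Ideal of polynomials whose coefficients in degree < k vanish. -/
noncomputable def lowCoeff (n k : ℕ) : Ideal (MvPolynomial (Fin n) ℤ) where
  carrier := {p | ∀ d : Fin n →₀ ℕ, d.degree < k → coeff d p = 0}
  zero_mem' := by intro d _; simp
  add_mem' := by intro a b ha hb d hd; simp [coeff_add, ha d hd, hb d hd]
  smul_mem' := by
    intro q p hp d hd
    rw [smul_eq_mul, coeff_mul]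
    refine Finset.sum_eq_zero fun x hx => ?_
    rw [Finset.HasAntidiagonal.mem_antidiagonal] at hx
    have h2 : x.2.degree ≤ d.degree := by
      rw [← hx, Finsupp.degree_add']; omega
    rw [hp x.2 (lt_of_le_of_lt h2 hd), mul_zero]

lemma lowCoeff_mul_le (a b : ℕ) : lowCoeff n a * lowCoeff n b ≤ lowCoeff n (a + b) := by
  rw [Ideal.mul_le]
  intro p hp q hq d hd
  rw [coeff_mul]
  refine Finset.sum_eq_zero fun x hx => ?_
  rw [Finset.HasAntidiagonal.mem_antidiagonal] at hx
  have hdeg : x.1.degree + x.2.degree = d.degree := by rw [← hx, Finsupp.degree_add']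
  rcases lt_or_ge x.1.degree a with h | h
  · rw [hp x.1 h, zero_mul]
  · rw [hq x.2 (by omega), mul_zero]

lemma mIdeal_pow_le (k : ℕ) : mIdeal n ^ k ≤ lowCoeff n k := by
  induction k with
  | zero => intro p _ d hd; omega
  | succ k ih =>
    have h1 : mIdeal n ≤ lowCoeff n 1 := by
      rw [Ideal.span_le]
      rintro _ ⟨j, rfl⟩ d hd
      have : d = 0 := by
        rw [← Finsupp.degree_eq_zero_iff]; omega
      subst this
      exact coeff_zero_X j
    calc mIdeal n ^ (k + 1) = mIdeal n * mIdeal n ^ k := by rw [pow_succ']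
    _ ≤ lowCoeff n 1 * lowCoeff n k := Ideal.mul_mono h1 ih
    _ ≤ lowCoeff n (1 + k) := lowCoeff_mul_le 1 k
    _ = lowCoeff n (k + 1) := by rw [Nat.add_comm]

section Phi
variable (n i : ℕ)

local notation "P" => MvPolynomial (Fin n) ℤ
noncomputable abbrev Qr := MvPolynomial (Fin n) ℤ ⧸ (mIdeal n ^ (i + 1))
noncomputable abbrev qmk : MvPolynomial (Fin n) ℤ →+* Qr n i := Ideal.Quotient.mk _

lemma X_mem_mIdeal (j : Fin n) : (MvPolynomial.X j : P) ∈ mIdeal n :=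
  Ideal.subset_span ⟨j, rfl⟩

lemma qmk_X_nilpotent (j : Fin n) : IsNilpotent (qmk n i (MvPolynomial.X j)) :=
  ⟨i + 1, by
    rw [← map_pow]
    exact Ideal.Quotient.eq_zero_iff_mem.2 (Ideal.pow_mem_pow (X_mem_mIdeal n j) _)⟩

/-- The unit `1 + x_j` in the quotient ring. -/
noncomputable def uX (j : Fin n) : (Qr n i)ˣ :=
  (IsNilpotent.isUnit_one_add (qmk_X_nilpotent n i j)).unit

lemma uX_spec (j : Fin n) : (uX n i j : Qr n i) = 1 + qmk n i (MvPolynomial.X j) :=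
  IsUnit.unit_spec _

/-- The monoid hom `ℤⁿ → Qr` sending `d ↦ ∏ (1+x_j)^(d j)`. -/
noncomputable def Fhom : Multiplicative (Fin n →₀ ℤ) →* Qr n i :=
  (Units.coeHom _).comp (AddMonoidHom.toMultiplicativeLeft
    (Finsupp.liftAddHom (α := Fin n) (M := ℤ) (N := Additive (Qr n i)ˣ)
      fun j => zmultiplesHom _ (Additive.ofMul (uX n i j))))

lemma Fhom_single (j : Fin n) :
    Fhom n i (Multiplicative.ofAdd (Finsupp.single j 1)) = uX n i j := by
  simp [Fhom, AddMonoidHom.toMultiplicativeLeft]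

/-- The ring hom `ℤ[t₁^{±1},…] → Qr`, `t_j ↦ 1 + x_j`. -/
noncomputable def phi : LaurentMv n →+* Qr n i :=
  AddMonoidAlgebra.liftNCRingHom (Int.castRingHom _) (Fhom n i) (fun _ _ => Commute.all _ _)

lemma phi_single (d : Fin n →₀ ℤ) (c : ℤ) :
    phi n i (AddMonoidAlgebra.single d c)
      = (Int.castRingHom (Qr n i)) c * Fhom n i (Multiplicative.ofAdd d) :=
  AddMonoidAlgebra.liftNC_single _ _ _ _

lemma phi_tvar (j : Fin n) : phi n i (tvar j) = 1 + qmk n i (MvPolynomial.X j) := by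
  rw [tvar, phi_single, Fhom_single, uX_spec]
  simp

lemma phi_tvar_sub_one (j : Fin n) : phi n i (tvar j - 1) = qmk n i (MvPolynomial.X j) := by
  rw [map_sub, map_one, phi_tvar]; ring

lemma phi_pow_eq_zero {p : LaurentMv n} (hp : p ∈ augIdeal n ^ (i + 1)) : phi n i p = 0 := by
  have h1 : Ideal.map (phi n i) (augIdeal n ^ (i + 1)) = ⊥ := by
    rw [Ideal.map_pow, augIdeal_eq_span, Ideal.map_span]
    have hc : (phi n i) ∘ (fun j => tvar j - 1) = (qmk n i) ∘ MvPolynomial.X :=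
      funext fun j => phi_tvar_sub_one n i j
    rw [show genSet n = Set.range fun j => tvar j - 1 from rfl, ← Set.range_comp, hc,
      Set.range_comp, ← Ideal.map_span, ← Ideal.map_pow]
    exact Ideal.map_quotient_self _
  have := Ideal.mem_map_of_mem (phi n i) hp
  rw [h1] at this
  rwa [Ideal.mem_bot] at this

end Phi

section Monomials
variable {n : ℕ}

/-- The exponent finsupp of the monomial `x_{ℓ₁}⋯x_{ℓ_k}`. -/
noncomputable def dexp {k : ℕ} (ℓ : Fin k → Fin n) : Fin n →₀ ℕ :=
  ∑ j, Finsupp.single (ℓ j) 1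

lemma degree_dexp {k : ℕ} (ℓ : Fin k → Fin n) : (dexp ℓ).degree = k := by
  rw [dexp, show (Finsupp.degree : (Fin n →₀ ℕ) → ℕ) = ⇑(Finsupp.weight 1) from
    by rw [Finsupp.degree_eq_weight_one]; rfl, map_sum]
  simp [Finsupp.weight_apply, Finsupp.sum_single_index]

lemma toMultiset_dexp {k : ℕ} (ℓ : Fin k → Fin n) :
    Finsupp.toMultiset (dexp ℓ) = ↑(List.ofFn ℓ) := by
  rw [dexp, map_sum]
  simp only [Finsupp.toMultiset_single, one_smul]
  induction k with
  | zero => simp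
  | succ k ih =>
    rw [Fin.sum_univ_succ, List.ofFn_succ, ← Multiset.cons_coe, ih (fun j => ℓ j.succ),
      ← Multiset.singleton_add]

lemma dexp_injective {k : ℕ} {ℓ ℓ' : Fin k → Fin n} (hℓ : Monotone ℓ) (hℓ' : Monotone ℓ')
    (h : dexp ℓ = dexp ℓ') : ℓ = ℓ' := by
  have hm : (↑(List.ofFn ℓ) : Multiset (Fin n)) = ↑(List.ofFn ℓ') := by
    rw [← toMultiset_dexp, ← toMultiset_dexp, h]
  exact List.ofFn_injective <| List.Perm.eq_of_sortedLE hℓ.sortedLE_ofFn hℓ'.sortedLE_ofFn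
    (Multiset.coe_eq_coe.1 hm)

lemma prod_X_eq_monomial {k : ℕ} (ℓ : Fin k → Fin n) :
    (∏ j : Fin k, (MvPolynomial.X (ℓ j) : MvPolynomial (Fin n) ℤ)) =
      MvPolynomial.monomial (dexp ℓ) 1 := by
  induction k with
  | zero => simp [dexp, MvPolynomial.monomial_zero', MvPolynomial.C_1]
  | succ k ih =>
    rw [Fin.prod_univ_succ, ih (fun j => ℓ j.succ)]
    simp only [dexp]
    rw [Fin.sum_univ_succ, MvPolynomial.X, MvPolynomial.monomial_mul, mul_one]

end Monomials

lemma phi_prod (n i k : ℕ) (ℓ : Fin k → Fin n) :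
    phi n i (∏ j : Fin k, (tvar (ℓ j) - 1)) =
      qmk n i (MvPolynomial.monomial (dexp ℓ) 1) := by
  rw [map_prod]
  simp only [phi_tvar_sub_one]
  rw [← map_prod, prod_X_eq_monomial]

open Pointwise

/-- For the augmentation ideal `J` of `ℤ[t₁^{±1},…,t_n^{±1}]`, the quotient `J^i/J^{i+1}`
is a free abelian group with basis the classes of the products
`(t_{ℓ₁}-1)⋯(t_{ℓ_i}-1)` over nondecreasing tuples `1 ≤ ℓ₁ ≤ ⋯ ≤ ℓ_i ≤ n`. -/
theorem augIdeal_graded_basis (n i : ℕ) :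
    ∃ b : Module.Basis {ℓ : Fin i → Fin n // Monotone ℓ} ℤ
        (↥(augIdeal n ^ i) ⧸
          Submodule.comap (augIdeal n ^ i).subtype (augIdeal n ^ (i + 1))),
      ∀ ℓ : {ℓ : Fin i → Fin n // Monotone ℓ},
        b ℓ = Submodule.Quotient.mk
          ⟨∏ j : Fin i, (tvar (ℓ.1 j) - 1),
            prod_mem_pow (augIdeal n) i _ (fun j => tvar_sub_one_mem (ℓ.1 j))⟩ := by
  set N := Submodule.comap (augIdeal n ^ i).subtype (augIdeal n ^ (i + 1)) with hN
  set e : {ℓ : Fin i → Fin n // Monotone ℓ} → ↥(augIdeal n ^ i) := fun ℓ =>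
    ⟨∏ j : Fin i, (tvar (ℓ.1 j) - 1),
      prod_mem_pow (augIdeal n) i _ (fun j => tvar_sub_one_mem (ℓ.1 j))⟩ with he
  set v : {ℓ : Fin i → Fin n // Monotone ℓ} → (↥(augIdeal n ^ i) ⧸ N) := fun ℓ =>
    Submodule.Quotient.mk (e ℓ) with hv
  have key : augIdeal n ^ i = Submodule.span (LaurentMv n) (genSet n ^ i) := by
    rw [augIdeal_eq_span]
    exact Submodule.span_pow _ _
  -- Linear independence
  have hli : LinearIndependent ℤ v := by
    rw [linearIndependent_iff']
    intro s g hsum ℓ₀ hℓ₀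
    have h0 : (∑ ℓ ∈ s, g ℓ • e ℓ) ∈ N := by
      rw [← Submodule.Quotient.mk_eq_zero]
      have hmk : Submodule.Quotient.mk (p := N) (∑ ℓ ∈ s, g ℓ • e ℓ) = ∑ ℓ ∈ s, g ℓ • v ℓ := by
        rw [← Submodule.mkQ_apply, map_sum]
        exact Finset.sum_congr rfl fun ℓ _ => by rw [map_zsmul]; rfl
      rw [hmk, hsum]
    have h0' : ((∑ ℓ ∈ s, g ℓ • e ℓ : ↥(augIdeal n ^ i)) : LaurentMv n)
        ∈ augIdeal n ^ (i + 1) := h0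
    have hcoe : ((∑ ℓ ∈ s, g ℓ • e ℓ : ↥(augIdeal n ^ i)) : LaurentMv n)
        = ∑ ℓ ∈ s, g ℓ • ∏ j : Fin i, (tvar (ℓ.1 j) - 1) := by
      simp [he]
    rw [hcoe] at h0'
    have hphi := phi_pow_eq_zero n i h0'
    have hrw : phi n i (∑ ℓ ∈ s, g ℓ • ∏ j : Fin i, (tvar (ℓ.1 j) - 1))
        = qmk n i (∑ ℓ ∈ s, g ℓ • MvPolynomial.monomial (dexp ℓ.1) (1 : ℤ)) := by
      rw [map_sum, map_sum]
      exact Finset.sum_congr rfl fun ℓ _ => by rw [map_zsmul, map_zsmul, phi_prod]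
    rw [hrw] at hphi
    have hmem : (∑ ℓ ∈ s, g ℓ • MvPolynomial.monomial (dexp ℓ.1) (1 : ℤ)) ∈ mIdeal n ^ (i + 1) :=
      Ideal.Quotient.eq_zero_iff_mem.1 hphi
    have hc := mIdeal_pow_le (i + 1) hmem (dexp ℓ₀.1) (by rw [degree_dexp]; omega)
    rw [MvPolynomial.coeff_sum] at hc
    simp only [MvPolynomial.coeff_smul, MvPolynomial.coeff_monomial] at hc
    rw [Finset.sum_eq_single_of_mem ℓ₀ hℓ₀ (fun ℓ hℓs hne => by
      rw [if_neg fun hdd => hne (Subtype.ext (dexp_injective ℓ.2 ℓ₀.2 hdd)), smul_zero])] at hc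
    simpa using hc
  -- Spanning
  have main : ∀ (z : LaurentMv n) (hz : z ∈ augIdeal n ^ i),
      Submodule.Quotient.mk (p := N) ⟨z, hz⟩ ∈ Submodule.span ℤ (Set.range v) := by
    intro z hz
    have hz' : z ∈ Submodule.span (LaurentMv n) (genSet n ^ i) := key ▸ hz
    refine Submodule.span_induction (p := fun x _ => ∀ h : x ∈ augIdeal n ^ i,
      Submodule.Quotient.mk (p := N) ⟨x, h⟩ ∈ Submodule.span ℤ (Set.range v))
      ?_ ?_ ?_ ?_ hz' hz
    · intro x hxs h
      obtain ⟨f, hf⟩ := Set.mem_pow.1 hxs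
      rw [List.prod_ofFn] at hf
      choose gfun hg using fun j => (f j).2
      have hmono : Monotone (gfun ∘ Tuple.sort gfun) := Tuple.monotone_sort gfun
      have hprod : ∏ j, (tvar ((gfun ∘ Tuple.sort gfun) j) - 1) = x := by
        rw [show ∏ j, (tvar ((gfun ∘ Tuple.sort gfun) j) - 1)
            = ∏ j, (tvar (gfun ((Tuple.sort gfun) j)) - 1) from rfl,
          Equiv.prod_comp (Tuple.sort gfun) (fun j => tvar (gfun j) - 1)]
        rw [← hf]
        exact Finset.prod_congr rfl fun j _ => hg j
      have hsub : (⟨x, h⟩ : ↥(augIdeal n ^ i)) = e ⟨gfun ∘ Tuple.sort gfun, hmono⟩ :=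
        Subtype.ext hprod.symm
      rw [hsub]
      exact Submodule.subset_span ⟨⟨gfun ∘ Tuple.sort gfun, hmono⟩, rfl⟩
    · intro h
      rw [show (⟨0, h⟩ : ↥(augIdeal n ^ i)) = 0 from rfl, Submodule.Quotient.mk_zero]
      exact zero_mem _
    · intro a b hxa hxb iha ihb h
      rw [← key] at hxa hxb
      rw [show (⟨a + b, h⟩ : ↥(augIdeal n ^ i)) = ⟨a, hxa⟩ + ⟨b, hxb⟩ from rfl,
        Submodule.Quotient.mk_add]
      exact add_mem (iha hxa) (ihb hxb)
    · intro r x hx' ih h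
      rw [← key] at hx'
      have hw : r - ((aug n r : ℤ) : LaurentMv n) ∈ augIdeal n := by
        simp [augIdeal, RingHom.mem_ker, map_sub, map_intCast]
      have hcx : (aug n r : ℤ) • x ∈ augIdeal n ^ i := Submodule.smul_of_tower_mem _ _ hx'
      have hdiff : r • x - (aug n r : ℤ) • x ∈ augIdeal n ^ (i + 1) := by
        have hdec : r • x - (aug n r : ℤ) • x = (r - ((aug n r : ℤ) : LaurentMv n)) * x := by
          rw [sub_mul, smul_eq_mul, zsmul_eq_mul]
        rw [hdec, pow_succ']
        exact Ideal.mul_mem_mul hw hx'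
      have heq : Submodule.Quotient.mk (p := N) ⟨r • x, h⟩
          = Submodule.Quotient.mk (p := N) ⟨(aug n r : ℤ) • x, hcx⟩ := by
        rw [Submodule.Quotient.eq]
        exact hdiff
      rw [heq, show (⟨(aug n r : ℤ) • x, hcx⟩ : ↥(augIdeal n ^ i))
          = (aug n r : ℤ) • ⟨x, hx'⟩ from rfl]
      rw [← Submodule.mkQ_apply, map_zsmul]
      exact Submodule.smul_mem _ _ (ih hx')
  have hsp : ⊤ ≤ Submodule.span ℤ (Set.range v) := by
    rintro x -
    obtain ⟨⟨z, hz⟩, rfl⟩ := Submodule.Quotient.mk_surjective N x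
    exact main z hz
  exact ⟨Module.Basis.mk hli hsp, fun ℓ => Module.Basis.mk_apply hli hsp ℓ⟩
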